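/- If R₁ and R₂ are strong probabilistic bisimulations on Con, then the reflexive-transitive closure of R₁ ∪ R₂ is also a strong probabilistic bisimulation. More generally, for any family (Rᵢ)_{i∈I} of strong probabilistic bisimulations, the reflexive-transitive closure (⋃ᵢ Rᵢ)* is a strong probabilistic bisimulation. -/

import Mathlib

/-- A finite-support probability distribution on `Con`. -/
structure FDist (Con : Type) where
  f : Con → ℝ
  nonneg : ∀ c, 0 ≤ f c
  le_one : ∀ c, f c ≤ 1
  finSupp : (Function.support f).Finite
  sum_one : ∑ᶠ c, f c = 1

/-- The mass a distribution assigns to a set: μ(M) = Σ_{c ∈ M} μ(c). -/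
noncomputable def FDist.mass {Con : Type} (μ : FDist Con) (M : Set Con) : ℝ :=
  ∑ᶠ c ∈ M, μ.f c

/-- Combined transition: convex closure of the transition relation `tr`. -/
def CTrans {Con Act : Type} (tr : Con → Act → FDist Con → Prop)
    (C : Con) (a : Act) (μ : FDist Con) : Prop :=
  ∃ (n : ℕ) (p : Fin n → ℝ) (μs : Fin n → FDist Con),
    (∀ i, 0 < p i ∧ p i ≤ 1) ∧ (∑ i, p i) = 1 ∧
    (∀ i, tr C a (μs i)) ∧ (∀ d, μ.f d = ∑ i, p i * (μs i).f d)

/-- μ ≡_R ν : the distributions agree on every R-equivalence class. -/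
def DistEquivRel {Con : Type} (R : Con → Con → Prop) (μ ν : FDist Con) : Prop :=
  ∀ c : Con, μ.mass {d | R c d} = ν.mass {d | R c d}

/-- A configuration with no outgoing transitions. -/
def Terminal {Con Act : Type} (tr : Con → Act → FDist Con → Prop) (C : Con) : Prop :=
  ∀ a μ, ¬ tr C a μ

/-- Strong probabilistic bisimulation. -/
def IsStrongBisim {Con Act S : Type} (tr : Con → Act → FDist Con → Prop)
    (ctx : Con → S) (R : Con → Con → Prop) : Prop :=
  Equivalence R ∧ ∀ C D, R C D →
    ((∀ a μ, tr C a μ → ∃ ν, CTrans tr D a ν ∧ DistEquivRel R μ ν) ∧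
     (Terminal tr C → ctx C = ctx D))

/-- Strong probabilistic bisimilarity: union of all strong probabilistic bisimulations. -/
def SBisim {Con Act S : Type} (tr : Con → Act → FDist Con → Prop)
    (ctx : Con → S) (C D : Con) : Prop :=
  ∃ R, IsStrongBisim tr ctx R ∧ R C D

/-! ### Auxiliary lemmas -/

section Aux

open Function Set

variable {Con Act S : Type}

/-- Mass only depends on the intersection with the support. -/
lemma FDist.mass_congr (μ : FDist Con) {s t : Set Con}
    (h : s ∩ Function.support μ.f = t ∩ Function.support μ.f) :
    μ.mass s = μ.mass t :=
  finsum_mem_inter_support_eq μ.f s t h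

/-- Mass is linear with respect to finite convex combinations. -/
lemma FDist.mass_sum {n : ℕ} (p : Fin n → ℝ) (μs : Fin n → FDist Con) (ν : FDist Con)
    (hf : ∀ d, ν.f d = ∑ i, p i * (μs i).f d) (M : Set Con) :
    ν.mass M = ∑ i, p i * (μs i).mass M := by
  unfold FDist.mass
  rw [finsum_mem_def]
  have h1 : ∀ d, Set.indicator M ν.f d = ∑ i, p i * Set.indicator M (μs i).f d := by
    intro d
    by_cases h : d ∈ M <;> simp [Set.indicator, h, hf d]
  rw [finsum_congr h1, finsum_sum_comm]
  · refine Finset.sum_congr rfl fun i _ => ?_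
    rw [← mul_finsum _ _, finsum_mem_def]
  · intro i _
    refine ((μs i).finSupp).subset ?_
    intro d hd
    simp only [Function.mem_support, ne_eq] at hd ⊢
    intro h0
    exact hd (by simp [Set.indicator_apply, h0, apply_ite (p i * ·)])

/-- A combined transition built from an arbitrary fintype-indexed convex combination. -/
lemma CTrans.of_fintype {tr : Con → Act → FDist Con → Prop} {C : Con} {a : Act}
    {ι : Type} [Fintype ι] (p : ι → ℝ) (μs : ι → FDist Con)
    (hp : ∀ i, 0 < p i ∧ p i ≤ 1) (hsum : ∑ i, p i = 1) (htr : ∀ i, tr C a (μs i))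
    (μ : FDist Con) (hf : ∀ d, μ.f d = ∑ i, p i * (μs i).f d) : CTrans tr C a μ := by
  obtain e := (Fintype.equivFin ι)
  refine ⟨Fintype.card ι, p ∘ e.symm, μs ∘ e.symm, fun i => hp _, ?_, fun i => htr _, ?_⟩
  · rw [show (∑ i, (p ∘ e.symm) i) = ∑ i, p (e.symm i) from rfl, Equiv.sum_comp e.symm p, hsum]
  · intro d
    rw [hf d]
    exact (Equiv.sum_comp e.symm fun i => p i * (μs i).f d).symm

/-- A single transition is a (trivial) combined transition. -/
lemma CTrans.single {tr : Con → Act → FDist Con → Prop} {C : Con} {a : Act} {μ : FDist Con}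
    (h : tr C a μ) : CTrans tr C a μ := by
  refine ⟨1, fun _ => 1, fun _ => μ, fun _ => ⟨one_pos, le_refl 1⟩, by simp, fun _ => h, by simp⟩

/-- A combined transition implies the existence of an actual transition. -/
lemma CTrans.not_terminal {tr : Con → Act → FDist Con → Prop} {C : Con} {a : Act} {μ : FDist Con}
    (h : CTrans tr C a μ) : ¬ Terminal tr C := by
  obtain ⟨n, p, μs, hp, hsum, htr, _⟩ := h
  intro hterm
  have hn : n ≠ 0 := by
    rintro rfl
    simp at hsum
  exact hterm a (μs ⟨0, Nat.pos_of_ne_zero hn⟩) (htr _)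

/-- `DistEquivRel` is monotone when passing from a finer equivalence to a coarser one. -/
lemma DistEquivRel.mono {R R' : Con → Con → Prop} (hR : Equivalence R) (hR' : Equivalence R')
    (hle : ∀ a b, R a b → R' a b) {μ ν : FDist Con} (h : DistEquivRel R μ ν) :
    DistEquivRel R' μ ν := by
  intro c₀
  set M : Set Con := {d | R' c₀ d} with hM
  set q : Con → Quot R := Quot.mk R with hq
  set F : Set Con := (Function.support μ.f ∪ Function.support ν.f) ∩ M with hF
  have hFfin : F.Finite := ((μ.finSupp.union ν.finSupp).inter_of_left M)
  set ι := ↥(q '' F) with hι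
  have : Finite ι := (hFfin.image q).to_subtype
  -- each fiber over `M` is either empty or a full `R`-class contained in `M`
  have hclass : ∀ c, c ∈ M → M ∩ q ⁻¹' {q c} = {d | R c d} := by
    intro c hc
    ext d
    simp only [Set.mem_inter_iff, Set.mem_preimage, Set.mem_singleton_iff, Set.mem_setOf_eq]
    constructor
    · rintro ⟨_, hd⟩
      exact hR.symm ((hR.eqvGen_iff).1 (Quot.eqvGen_exact hd))
    · intro hd
      exact ⟨hR'.trans hc (hle _ _ hd), Quot.eqvGen_sound (Relation.EqvGen.symm _ _ (Relation.EqvGen.rel _ _ hd))⟩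
  -- generic computation of the mass of `M` as a sum of class masses
  have key : ∀ ρ : FDist Con, Function.support ρ.f ⊆ Function.support μ.f ∪ Function.support ν.f →
      ρ.mass M = ∑ᶠ y : ι, ρ.mass (M ∩ q ⁻¹' {(y : Quot R)}) := by
    intro ρ hsupp
    have hU : (⋃ y : ι, M ∩ q ⁻¹' {(y : Quot R)} ∩ Function.support ρ.f)
        = M ∩ Function.support ρ.f := by
      ext d
      simp only [Set.mem_iUnion, Set.mem_inter_iff, Set.mem_preimage, Set.mem_singleton_iff]
      constructor
      · rintro ⟨y, ⟨hdM, _⟩, hds⟩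
        exact ⟨hdM, hds⟩
      · rintro ⟨hdM, hds⟩
        exact ⟨⟨q d, ⟨d, ⟨hsupp hds, hdM⟩, rfl⟩⟩, ⟨hdM, rfl⟩, hds⟩
    have hdisj : Pairwise (Disjoint on fun y : ι =>
        M ∩ q ⁻¹' {(y : Quot R)} ∩ Function.support ρ.f) := by
      intro y z hyz
      refine Set.disjoint_left.2 ?_
      rintro d ⟨⟨_, hdy⟩, _⟩ ⟨⟨_, hdz⟩, _⟩
      simp only [Set.mem_preimage, Set.mem_singleton_iff] at hdy hdz
      exact hyz (Subtype.ext (hdy ▸ hdz))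
    have hfin : ∀ y : ι, (M ∩ q ⁻¹' {(y : Quot R)} ∩ Function.support ρ.f).Finite :=
      fun y => ρ.finSupp.subset (Set.inter_subset_right)
    calc ρ.mass M = ρ.mass (⋃ y : ι, M ∩ q ⁻¹' {(y : Quot R)} ∩ Function.support ρ.f) := by
          refine ρ.mass_congr ?_
          rw [hU]
          exact (Set.inter_eq_self_of_subset_left Set.inter_subset_right).symm
      _ = ∑ᶠ y : ι, ∑ᶠ d ∈ (M ∩ q ⁻¹' {(y : Quot R)} ∩ Function.support ρ.f), ρ.f d :=
          finsum_mem_iUnion hdisj hfin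
      _ = ∑ᶠ y : ι, ρ.mass (M ∩ q ⁻¹' {(y : Quot R)}) := by
          refine finsum_congr fun y => ?_
          refine (ρ.mass_congr ?_).symm
          ext d
          simp only [Set.mem_inter_iff, Function.mem_support]
          tauto
  rw [key μ Set.subset_union_left, key ν Set.subset_union_right]
  refine finsum_congr fun y => ?_
  obtain ⟨c, hcF, hcy⟩ := y.2
  have hcM : c ∈ M := hcF.2
  rw [show ((y : Quot R)) = q c from hcy.symm, hclass c hcM]
  exact h c

/-- Lifting the transfer property from single transitions to combined transitions. -/
lemma CTrans.lift {tr : Con → Act → FDist Con → Prop} {R : Con → Con → Prop}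
    {C D : Con}
    (htrans : ∀ a μ, tr C a μ → ∃ ν, CTrans tr D a ν ∧ DistEquivRel R μ ν)
    {a : Act} {μ : FDist Con} (h : CTrans tr C a μ) :
    ∃ ν, CTrans tr D a ν ∧ DistEquivRel R μ ν := by
  classical
  obtain ⟨n, p, μs, hp, hsum, htr, hf⟩ := h
  choose νs hν hequiv using fun i => htrans a (μs i) (htr i)
  choose m q ρ hq hqsum hρtr hρf using fun i => hν i
  -- build the convex combination ν of the νs
  have hcomb : ∀ d, (0:ℝ) ≤ ∑ i, p i * (νs i).f d := fun d =>
    Finset.sum_nonneg fun i _ => mul_nonneg (hp i).1.le ((νs i).nonneg d)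
  refine ⟨⟨fun d => ∑ i, p i * (νs i).f d, hcomb, ?_, ?_, ?_⟩, ?_, ?_⟩
  · intro d
    calc ∑ i, p i * (νs i).f d ≤ ∑ i, p i * 1 :=
          Finset.sum_le_sum fun i _ =>
            mul_le_mul_of_nonneg_left ((νs i).le_one d) (hp i).1.le
      _ = 1 := by simp [hsum]
  · refine Set.Finite.subset (Set.finite_iUnion fun i => (νs i).finSupp) ?_
    intro d hd
    simp only [Function.mem_support] at hd
    by_contra hcon
    simp only [Set.mem_iUnion, Function.mem_support, not_exists, not_not] at hcon
    exact hd (Finset.sum_eq_zero fun i _ => by rw [hcon i, mul_zero])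
  · rw [finsum_sum_comm]
    · have : ∀ i ∈ Finset.univ, (∑ᶠ d, p i * (νs i).f d) = p i := by
        intro i _
        rw [← mul_finsum _ _, (νs i).sum_one, mul_one]
      rw [Finset.sum_congr rfl this, hsum]
    · intro i _
      refine ((νs i).finSupp).subset ?_
      intro d hd
      simp only [Function.mem_support, ne_eq] at hd ⊢
      intro h0
      exact hd (by rw [h0, mul_zero])
  · -- the combined transition from D
    refine CTrans.of_fintype (ι := Σ i : Fin n, Fin (m i))
      (fun x => p x.1 * q x.1 x.2) (fun x => ρ x.1 x.2)
      (fun x => ⟨mul_pos (hp x.1).1 (hq x.1 x.2).1,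
        mul_le_one₀ (hp x.1).2 (hq x.1 x.2).1.le (hq x.1 x.2).2⟩) ?_
      (fun x => hρtr x.1 x.2) _ ?_
    · rw [← Finset.univ_sigma_univ, Finset.sum_sigma]
      calc (∑ i, ∑ j, p i * q i j) = ∑ i, p i * ∑ j, q i j := by
            refine Finset.sum_congr rfl fun i _ => ?_
            rw [Finset.mul_sum]
        _ = 1 := by
            simp only [hqsum, mul_one, hsum]
    · intro d
      show (∑ i, p i * (νs i).f d) = _
      rw [← Finset.univ_sigma_univ, Finset.sum_sigma]
      refine Finset.sum_congr rfl fun i _ => ?_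
      rw [hρf i d, Finset.mul_sum]
      refine Finset.sum_congr rfl fun j _ => ?_
      ring
  · -- μ ≡_R ν
    intro c
    rw [FDist.mass_sum p μs _ hf, FDist.mass_sum p νs _ (fun d => rfl)]
    exact Finset.sum_congr rfl fun i _ => by rw [hequiv i c]

/-- The general family case: the reflexive-transitive closure of a union of strong
bisimulations is a strong bisimulation. -/
lemma main_family {Con Act S : Type} (tr : Con → Act → FDist Con → Prop) (ctx : Con → S)
    {I : Type} (R : I → Con → Con → Prop) (hR : ∀ i, IsStrongBisim tr ctx (R i)) :
    IsStrongBisim tr ctx (Relation.ReflTransGen (fun a b => ∃ i, R i a b)) := by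
  set U : Con → Con → Prop := fun a b => ∃ i, R i a b with hU
  set Rs := Relation.ReflTransGen U with hRs
  have hUsymm : Symmetric U := fun a b ⟨i, h⟩ => ⟨i, (hR i).1.symm h⟩
  have hequiv : Equivalence Rs :=
    ⟨fun _ => Relation.ReflTransGen.refl,
     fun h => (@Relation.ReflTransGen.symmetric _ U ⟨hUsymm⟩).symm _ _ h,
     fun h h' => Relation.ReflTransGen.trans h h'⟩
  have hle : ∀ i a b, R i a b → Rs a b := fun i a b h => Relation.ReflTransGen.single ⟨i, h⟩
  have key : ∀ C D, Rs C D →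
      (∀ a μ, CTrans tr C a μ → ∃ ν, CTrans tr D a ν ∧ DistEquivRel Rs μ ν) ∧
      (Terminal tr C → Terminal tr D ∧ ctx C = ctx D) := by
    intro C D h
    induction h with
    | refl => exact ⟨fun a μ h => ⟨μ, h, fun c => rfl⟩, fun h => ⟨h, rfl⟩⟩
    | @tail b c _ hbc ih =>
      obtain ⟨i, hi⟩ := hbc
      constructor
      · intro a μ hμ
        obtain ⟨ν, hν, hμν⟩ := ih.1 a μ hμ
        obtain ⟨ν', hν', hνν'⟩ :=
          CTrans.lift (fun a μ h => ((hR i).2 b c hi).1 a μ h) hν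
        refine ⟨ν', hν', ?_⟩
        have hνν'' : DistEquivRel Rs ν ν' :=
          DistEquivRel.mono (hR i).1 hequiv (hle i) hνν'
        intro x
        rw [hμν x, hνν'' x]
      · intro hterm
        obtain ⟨htb, hctx⟩ := ih.2 hterm
        have htc : Terminal tr c := by
          intro a μ hμ
          obtain ⟨ν, hν, _⟩ := ((hR i).2 c b ((hR i).1.symm hi)).1 a μ hμ
          exact CTrans.not_terminal hν htb
        exact ⟨htc, hctx.trans (((hR i).2 b c hi).2 htb)⟩
  refine ⟨hequiv, fun C D h => ⟨fun a μ hμ => (key C D h).1 a μ (CTrans.single hμ),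
    fun hterm => ((key C D h).2 hterm).2⟩⟩

end Aux

/-- the reflexive-transitive closure of a union of strong
probabilistic bisimulations is a strong probabilistic bisimulation (binary case
and the general family case). -/
theorem stmt_6 {Con Act S : Type} (tr : Con → Act → FDist Con → Prop) (ctx : Con → S)
    (R1 R2 : Con → Con → Prop)
    (h1 : IsStrongBisim tr ctx R1) (h2 : IsStrongBisim tr ctx R2)
    {I : Type} (R : I → Con → Con → Prop) (hR : ∀ i, IsStrongBisim tr ctx (R i)) :
    IsStrongBisim tr ctx (Relation.ReflTransGen (fun a b => R1 a b ∨ R2 a b)) ∧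
    IsStrongBisim tr ctx (Relation.ReflTransGen (fun a b => ∃ i, R i a b)) := by
  constructor
  · have heq : (fun a b => R1 a b ∨ R2 a b)
        = fun a b => ∃ i : Bool, (if i then R1 else R2) a b := by
      funext a b
      apply propext
      constructor
      · rintro (h | h)
        · exact ⟨true, by simpa using h⟩
        · exact ⟨false, by simpa using h⟩
      · rintro ⟨i, h⟩
        cases i
        · exact Or.inr (by simpa using h)
        · exact Or.inl (by simpa using h)
    rw [heq]
    exact main_family (Act := Act) tr ctx (fun i : Bool => if i then R1 else R2)
      (fun i => by cases i <;> simpa)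
  · exact main_family (Act := Act) tr ctx R hR
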